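/- Let G=(V,E) be a finite tree and let Ψ be the state represented by a graph tensor network on G. Fix a vertex a∈V. Then the environment tensor ξ_a factorizes as a product of the subtree message matrices of the neighbors of a: for all families (j_b)_{b∈∂a} and (j'_b)_{b∈∂a} of bond-index values, ξ_a[(j_b)_{b∈∂a},(j'_b)_{b∈∂a}] = Π_{b∈∂a} m_{b→a}[j_b, j'_b]. -/

import Mathlib

open scoped BigOperators

variable {V : Type*} [Fintype V] [DecidableEq V]

/-- A graph tensor network on a finite simple graph `G`: a bond dimension `d e ≥ 1` for each
edge `e`, and for each vertex `a` a tensor `T a` taking a physical index in `Fin 2` and a bond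
index (a natural number, relevant values being those `< d e`) for each edge incident to `a`. -/
structure TensorNet (G : SimpleGraph V) [DecidableRel G.Adj] where
  d : G.edgeSet → ℕ
  d_pos : ∀ e, 0 < d e
  T : ∀ a : V, Fin 2 → ({e : G.edgeSet // a ∈ (e : Sym2 V)} → ℕ) → ℂ

namespace TensorNet

variable {G : SimpleGraph V} [DecidableRel G.Adj]

/-- The state represented by a graph tensor network:
`Ψ[(i_a)_{a∈V}] = Σ_{j} Π_{a∈V} T_a[i_a, (j_{ab})_{b∈∂a}]`, the sum running over all assignments
of a bond-index value `j_e ∈ {0,…,d_e−1}` to each edge `e ∈ E`. -/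
noncomputable def psi (net : TensorNet G) (i : V → Fin 2) : ℂ :=
  ∑ j ∈ Fintype.piFinset (fun e : G.edgeSet => Finset.range (net.d e)),
    ∏ a : V, net.T a (i a) (fun e => j e.1)

/-- The (i,i') entry of the single-qubit reduced density matrix
`ρ_a = Tr_{V∖{a}} |Ψ⟩⟨Ψ|` of the represented state at vertex `a`. -/
noncomputable def rho (net : TensorNet G) (a : V) (i i' : Fin 2) : ℂ :=
  ∑ f : ({c : V // c ≠ a} → Fin 2),
    net.psi (fun c => if h : c = a then i else f ⟨c, h⟩) *
      (starRingEnd ℂ) (net.psi (fun c => if h : c = a then i' else f ⟨c, h⟩))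

/-- The environment tensor `ξ_a` of vertex `a`. -/
noncomputable def env (net : TensorNet G) (a : V)
    (J J' : {e : G.edgeSet // a ∈ (e : Sym2 V)} → ℕ) : ℂ :=
  ∑ i : ({c : V // c ≠ a} → Fin 2),
    ∑ k ∈ Fintype.piFinset (fun e : {e : G.edgeSet // a ∉ (e : Sym2 V)} =>
        Finset.range (net.d e.1)),
      ∑ k' ∈ Fintype.piFinset (fun e : {e : G.edgeSet // a ∉ (e : Sym2 V)} =>
          Finset.range (net.d e.1)),
        ∏ c : {c : V // c ≠ a},
          net.T c.1 (i c)
              (fun e => if h : a ∈ (e.1 : Sym2 V) then J ⟨e.1, h⟩ else k ⟨e.1, h⟩) *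
            (starRingEnd ℂ)
              (net.T c.1 (i c)
                (fun e => if h : a ∈ (e.1 : Sym2 V) then J' ⟨e.1, h⟩ else k' ⟨e.1, h⟩))

end TensorNet

/-- `branchV G a b` is the vertex set `V_{b→a}` of the connected component of `b` in the
graph `G` with the edge `{a,b}` removed. -/
def branchV (G : SimpleGraph V) (a b : V) : Set V :=
  {c | (G.deleteEdges {s(a, b)}).Reachable b c}

/-- `branchE G a b` is the edge set `E_{b→a}` of the connected component of `b` in the
graph `G` with the edge `{a,b}` removed. -/
def branchE (G : SimpleGraph V) [DecidableRel G.Adj] (a b : V) : Set G.edgeSet :=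
  {e | (e : Sym2 V) ≠ s(a, b) ∧ ∀ x ∈ (e : Sym2 V), x ∈ branchV G a b}

namespace TensorNet

variable {G : SimpleGraph V} [DecidableRel G.Adj]

open scoped Classical in
/-- The message matrix `m_{b→a}` of the directed edge `b → a`. -/
noncomputable def message (net : TensorNet G) (a b : V) (j j' : ℕ) : ℂ :=
  ∑ i : ({c : V // c ∈ branchV G a b} → Fin 2),
    ∑ k ∈ Fintype.piFinset (fun e : {e : G.edgeSet // e ∈ branchE G a b} =>
        Finset.range (net.d e.1)),
      ∑ k' ∈ Fintype.piFinset (fun e : {e : G.edgeSet // e ∈ branchE G a b} =>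
          Finset.range (net.d e.1)),
        ∏ c : {c : V // c ∈ branchV G a b},
          net.T c.1 (i c)
              (fun e => if (e.1 : Sym2 V) = s(a, b) then j
                else if h : e.1 ∈ branchE G a b then k ⟨e.1, h⟩ else 0) *
            (starRingEnd ℂ)
              (net.T c.1 (i c)
                (fun e => if (e.1 : Sym2 V) = s(a, b) then j'
                  else if h : e.1 ∈ branchE G a b then k' ⟨e.1, h⟩ else 0))

open scoped Classical in
/-- The branch vector `w_{b→a}(j)`. -/
noncomputable def branchVec (net : TensorNet G) (a b : V) (j : ℕ) :
    ({c : V // c ∈ branchV G a b} → Fin 2) → ℂ := fun i =>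
  ∑ k ∈ Fintype.piFinset (fun e : {e : G.edgeSet // e ∈ branchE G a b} =>
      Finset.range (net.d e.1)),
    ∏ c : {c : V // c ∈ branchV G a b},
      net.T c.1 (i c)
        (fun e => if (e.1 : Sym2 V) = s(a, b) then j
          else if h : e.1 ∈ branchE G a b then k ⟨e.1, h⟩ else 0)

end TensorNet


section TreeAux

open SimpleGraph

namespace TB

variable {G : SimpleGraph V} {a b c u : V}
lemma walk_del (w : G.Walk u c) (a b : V) :
    (G.deleteEdges {s(a, b)}).Reachable u c ∨ (G.deleteEdges {s(a, b)}).Reachable a c ∨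
      (G.deleteEdges {s(a, b)}).Reachable b c := by
  induction w with
  | nil => exact Or.inl (Reachable.refl _)
  | @cons u x c h p ih =>
    rcases ih with hx | h' | h''
    · by_cases he : s(u, x) = s(a, b)
      · rcases Sym2.eq_iff.mp he with ⟨rfl, rfl⟩ | ⟨rfl, rfl⟩
        · exact Or.inr (Or.inr hx)
        · exact Or.inr (Or.inl hx)
      · have : (G.deleteEdges {s(a, b)}).Adj u x := by
          rw [deleteEdges_adj]; exact ⟨h, by simp [he]⟩
        exact Or.inl (this.reachable.trans hx)
    · exact Or.inr (Or.inl h')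
    · exact Or.inr (Or.inr h'')

lemma reach_or (hc : G.Connected) (a b c : V) :
    (G.deleteEdges {s(a, b)}).Reachable a c ∨ (G.deleteEdges {s(a, b)}).Reachable b c := by
  obtain ⟨w⟩ := hc.preconnected a c
  rcases walk_del w a b with h | h | h
  · exact Or.inl h
  · exact Or.inl h
  · exact Or.inr h

lemma not_bridge_reach (hG : G.IsTree) (hab : G.Adj a b) :
    ¬ (G.deleteEdges {s(a, b)}).Reachable a b :=
  isBridge_iff.mp (isAcyclic_iff_forall_adj_isBridge.mp hG.IsAcyclic hab)

lemma mem_branchV_iff (hG : G.IsTree) (hab : G.Adj a b) (c : V) :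
    c ∈ branchV G a b ↔ ¬ (G.deleteEdges {s(a, b)}).Reachable a c := by
  constructor
  · intro hbc hac
    exact not_bridge_reach hG hab (hac.trans hbc.symm)
  · intro hac
    rcases reach_or hG.isConnected a b c with h | h
    · exact absurd h hac
    · exact h

lemma not_mem_branchV_self (hG : G.IsTree) (hab : G.Adj a b) : a ∉ branchV G a b :=
  fun h => (mem_branchV_iff hG hab a).mp h (Reachable.refl a)

lemma branch_unique (hG : G.IsTree) {b' : V} (hb : G.Adj a b) (hb' : G.Adj a b')
    (hc : c ∈ branchV G a b) (hc' : c ∈ branchV G a b') : b = b' := by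
  classical
  by_contra hne
  have hac : ¬ (G.deleteEdges {s(a, b)}).Reachable a c := (mem_branchV_iff hG hb c).mp hc
  have hac' : ¬ (G.deleteEdges {s(a, b')}).Reachable a c := (mem_branchV_iff hG hb' c).mp hc'
  obtain ⟨w⟩ := (hc' : (G.deleteEdges {s(a, b')}).Reachable b' c)
  by_cases hmem : s(a, b) ∈ w.edges
  · have haw : a ∈ w.support := w.fst_mem_support_of_mem_edges hmem
    exact hac' ⟨w.dropUntil a haw⟩
  · -- transfer w to deleteEdges {s(a,b)}
    have hsub : ∀ e ∈ w.edges, e ∈ (G.deleteEdges {s(a, b)}).edgeSet := by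
      intro e he
      rw [edgeSet_deleteEdges]
      refine ⟨?_, ?_⟩
      · have := w.edges_subset_edgeSet he
        rw [edgeSet_deleteEdges] at this
        exact this.1
      · intro hes
        simp only [Set.mem_singleton_iff] at hes
        exact hmem (hes ▸ he)
    have hr : (G.deleteEdges {s(a, b)}).Reachable b' c := ⟨w.transfer _ hsub⟩
    have hadj : (G.deleteEdges {s(a, b)}).Adj a b' := by
      rw [deleteEdges_adj]
      refine ⟨hb', ?_⟩
      intro hmem2
      rw [Set.mem_singleton_iff, Sym2.eq_iff] at hmem2
      rcases hmem2 with ⟨-, h⟩ | ⟨h, -⟩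
      · exact hne h.symm
      · cases h; exact G.irrefl hb
    exact hac (hadj.reachable.trans hr)

lemma exists_branch (hG : G.IsTree) (hc : c ≠ a) :
    ∃ b, G.Adj a b ∧ c ∈ branchV G a b := by
  classical
  obtain ⟨w0⟩ := hG.isConnected.preconnected a c
  obtain ⟨w, hw⟩ : ∃ w : G.Walk a c, w.IsPath := ⟨w0.toPath.1, w0.toPath.2⟩
  cases w with
  | nil => exact absurd rfl hc.symm
  | @cons _ x _ h q =>
    rw [SimpleGraph.Walk.cons_isPath_iff] at hw
    refine ⟨x, h, ?_⟩
    have hsub : ∀ e ∈ q.edges, e ∈ (G.deleteEdges {s(a, x)}).edgeSet := by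
      intro e he
      rw [edgeSet_deleteEdges]
      refine ⟨q.edges_subset_edgeSet he, ?_⟩
      intro hes
      simp only [Set.mem_singleton_iff] at hes
      subst hes
      exact hw.2 (q.fst_mem_support_of_mem_edges he)
    exact ⟨q.transfer _ hsub⟩

lemma ne_of_mem_branchV (hG : G.IsTree) (hab : G.Adj a b) (hc : c ∈ branchV G a b) : c ≠ a :=
  fun h => not_mem_branchV_self hG hab (h ▸ hc)

lemma eq_of_adj_mem_branchV (hG : G.IsTree) (hab : G.Adj a b) (hc : c ∈ branchV G a b)
    (hac : G.Adj a c) : c = b :=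
  branch_unique hG hac hab (Reachable.refl _) hc

lemma mem_branchE_of [DecidableRel G.Adj] (hG : G.IsTree) (hab : G.Adj a b) (e : G.edgeSet)
    (ha : a ∉ (e : Sym2 V)) (hce : c ∈ (e : Sym2 V)) (hcb : c ∈ branchV G a b) :
    e ∈ branchE G a b := by
  have hne : (e : Sym2 V) ≠ s(a, b) := fun h => ha (by rw [h]; exact Sym2.mem_mk_left a b)
  refine ⟨hne, ?_⟩
  obtain ⟨es, hev⟩ := e
  induction es using Sym2.ind with
  | _ u v =>
    intro x hx
    simp only at hne ha hce hcb ⊢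
    rw [Sym2.mem_iff] at hx hce
    have huv : G.Adj u v := hev
    have hadj : (G.deleteEdges {s(a, b)}).Adj u v := by
      rw [deleteEdges_adj]
      exact ⟨huv, fun h => hne (Set.mem_singleton_iff.mp h)⟩
    rcases hx with rfl | rfl <;> rcases hce with rfl | rfl
    · exact hcb
    · exact Reachable.trans hcb hadj.symm.reachable
    · exact Reachable.trans hcb hadj.reachable
    · exact hcb

lemma not_mem_of_branchE [DecidableRel G.Adj] (hG : G.IsTree) (hab : G.Adj a b)
    {e : G.edgeSet} (he : e ∈ branchE G a b) : a ∉ (e : Sym2 V) := by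
  intro ha
  exact not_mem_branchV_self hG hab (he.2 a ha)

lemma exists_edge_branch (hG : G.IsTree) [DecidableRel G.Adj] (e : G.edgeSet)
    (ha : a ∉ (e : Sym2 V)) : ∃ b, G.Adj a b ∧ e ∈ branchE G a b := by
  have hu : (e : Sym2 V).out.1 ∈ (e : Sym2 V) := Sym2.out_fst_mem _
  have hune : (e : Sym2 V).out.1 ≠ a := fun h => ha (h ▸ hu)
  obtain ⟨b, hb, hub⟩ := exists_branch hG hune
  exact ⟨b, hb, mem_branchE_of hG hb e ha hu hub⟩

lemma edge_branch_unique (hG : G.IsTree) [DecidableRel G.Adj] {b' : V} (hb : G.Adj a b)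
    (hb' : G.Adj a b') {e : G.edgeSet} (he : e ∈ branchE G a b) (he' : e ∈ branchE G a b') :
    b = b' := by
  have hu : (e : Sym2 V).out.1 ∈ (e : Sym2 V) := Sym2.out_fst_mem _
  exact branch_unique hG hb hb' (he.2 _ hu) (he'.2 _ hu)

lemma edge_eq_of_mem (hG : G.IsTree) (hab : G.Adj a b) (hc : c ∈ branchV G a b)
    (e : G.edgeSet) (hae : a ∈ (e : Sym2 V)) (hce : c ∈ (e : Sym2 V)) :
    (e : Sym2 V) = s(a, b) := by
  have hca : c ≠ a := ne_of_mem_branchV hG hab hc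
  obtain ⟨es, hev⟩ := e
  induction es using Sym2.ind with
  | _ u v =>
    simp only at hae hce ⊢
    rw [Sym2.mem_iff] at hae hce
    have huv : G.Adj u v := hev
    have hcb : c = b := by
      apply eq_of_adj_mem_branchV hG hab hc
      rcases hae with rfl | rfl <;> rcases hce with rfl | rfl
      · exact absurd rfl hca
      · exact huv
      · exact huv.symm
      · exact absurd rfl hca
    subst hcb
    rcases hae with rfl | rfl <;> rcases hce with rfl | rfl
    · exact absurd rfl hca
    · rfl
    · exact Sym2.eq_swap
    · exact absurd rfl hca


lemma sigmaV_ext {G : SimpleGraph V} {a : V}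
    (p q : Σ b : {b : V // G.Adj a b}, {c : V // c ∈ branchV G a b.1})
    (h1 : p.1.1 = q.1.1) (h2 : p.2.1 = q.2.1) : p = q := by
  rcases p with ⟨⟨pb, hpb⟩, ⟨pc, hpc⟩⟩
  rcases q with ⟨⟨qb, hqb⟩, ⟨qc, hqc⟩⟩
  dsimp at h1 h2
  subst h1; subst h2; rfl

lemma vert_app_congr {G : SimpleGraph V} {a : V} {β : Sort*}
    (K : ∀ b : {b : V // G.Adj a b}, {c : V // c ∈ branchV G a b.1} → β)
    {b b' : {b : V // G.Adj a b}} (h : b = b')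
    {c : {c : V // c ∈ branchV G a b.1}} {c' : {c : V // c ∈ branchV G a b'.1}}
    (hv : c.1 = c'.1) : K b c = K b' c' := by
  subst h; cases Subtype.ext hv; rfl

lemma branch_app_congr {G : SimpleGraph V} [DecidableRel G.Adj] {a : V} {β : Sort*}
    (K : ∀ b : {b : V // G.Adj a b}, {e : G.edgeSet // e ∈ branchE G a b.1} → β)
    {b b' : {b : V // G.Adj a b}} (h : b = b')
    {e : {e : G.edgeSet // e ∈ branchE G a b.1}} {e' : {e : G.edgeSet // e ∈ branchE G a b'.1}}
    (hv : e.1 = e'.1) : K b e = K b' e' := by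
  subst h; cases Subtype.ext hv; rfl

variable [DecidableRel G.Adj]

/-- The neighbor of `a` whose branch contains the vertex `c ≠ a`. -/
noncomputable def branchOf (hG : G.IsTree) {a : V} (c : {c : V // c ≠ a}) :
    {b : V // G.Adj a b} :=
  ⟨(exists_branch hG c.2).choose, (exists_branch hG c.2).choose_spec.1⟩

lemma branchOf_mem (hG : G.IsTree) {a : V} (c : {c : V // c ≠ a}) :
    c.1 ∈ branchV G a (branchOf hG c).1 :=
  (exists_branch hG c.2).choose_spec.2

lemma branchOf_eq (hG : G.IsTree) {a : V} (c : {c : V // c ≠ a}) (b : {b : V // G.Adj a b})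
    (hc : c.1 ∈ branchV G a b.1) : branchOf hG c = b :=
  Subtype.ext (branch_unique hG (branchOf hG c).2 b.2 (branchOf_mem hG c) hc)

/-- The neighbor of `a` whose branch contains the edge `e` not incident to `a`. -/
noncomputable def edgeBranchOf (hG : G.IsTree) {a : V}
    (e : {e : G.edgeSet // a ∉ (e : Sym2 V)}) : {b : V // G.Adj a b} :=
  ⟨(exists_edge_branch hG e.1 e.2).choose, (exists_edge_branch hG e.1 e.2).choose_spec.1⟩

lemma edgeBranchOf_mem (hG : G.IsTree) {a : V} (e : {e : G.edgeSet // a ∉ (e : Sym2 V)}) :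
    e.1 ∈ branchE G a (edgeBranchOf hG e).1 :=
  (exists_edge_branch hG e.1 e.2).choose_spec.2

lemma edgeBranchOf_eq (hG : G.IsTree) {a : V} (e : {e : G.edgeSet // a ∉ (e : Sym2 V)})
    (b : {b : V // G.Adj a b}) (he : e.1 ∈ branchE G a b.1) : edgeBranchOf hG e = b :=
  Subtype.ext (edge_branch_unique hG (edgeBranchOf hG e).2 b.2 (edgeBranchOf_mem hG e) he)

/-- The vertices distinct from `a` are partitioned into the branches of the neighbors of `a`. -/
noncomputable def vertEquiv (hG : G.IsTree) (a : V) :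
    {c : V // c ≠ a} ≃ Σ b : {b : V // G.Adj a b}, {c : V // c ∈ branchV G a b.1} where
  toFun c := ⟨branchOf hG c, ⟨c.1, branchOf_mem hG c⟩⟩
  invFun p := ⟨p.2.1, ne_of_mem_branchV hG p.1.2 p.2.2⟩
  left_inv c := rfl
  right_inv p := sigmaV_ext _ _
    (congrArg Subtype.val (branchOf_eq hG _ p.1 p.2.2)) rfl

/-- Spin configurations on `V ∖ {a}` are families of spin configurations on the branches. -/
noncomputable def spinEquiv (hG : G.IsTree) (a : V) :
    ({c : V // c ≠ a} → Fin 2) ≃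
      (∀ b : {b : V // G.Adj a b}, {c : V // c ∈ branchV G a b.1} → Fin 2) where
  toFun i b c := i ⟨c.1, ne_of_mem_branchV hG b.2 c.2⟩
  invFun I c := I (branchOf hG c) ⟨c.1, branchOf_mem hG c⟩
  left_inv i := funext fun c => congrArg i (Subtype.ext rfl)
  right_inv I := by
    funext b c
    exact vert_app_congr I (branchOf_eq hG _ b c.2) rfl

lemma factor_sum {α : Type*} [Fintype α] {κ κ' : Type*} (s : Finset κ) (t : Finset κ')
    (A : κ → α → ℂ) (B : κ' → α → ℂ) :
    (∑ k ∈ s, ∑ k' ∈ t, ∏ c, A k c * (starRingEnd ℂ) (B k' c)) =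
      (∑ k ∈ s, ∏ c, A k c) * (starRingEnd ℂ) (∑ k' ∈ t, ∏ c, B k' c) := by
  rw [map_sum, Finset.sum_mul_sum]
  refine Finset.sum_congr rfl fun k _ => Finset.sum_congr rfl fun k' _ => ?_
  rw [Finset.prod_mul_distrib, map_prod]

end TB

end TreeAux

set_option maxHeartbeats 1600000 in
/-- For a graph tensor network on a finite tree `G` and a vertex `a`, the
environment tensor `ξ_a` factorizes as the product, over the neighbors `b` of `a`, of the
subtree message matrices `m_{b→a}` evaluated at the bond indices of the edge `{a,b}`. -/
theorem environment_factorizes_on_tree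
    {V : Type*} [Fintype V] [DecidableEq V] {G : SimpleGraph V} [DecidableRel G.Adj]
    (hG : G.IsTree) (net : TensorNet G) (a : V)
    (J J' : {e : G.edgeSet // a ∈ (e : Sym2 V)} → ℕ)
    (hJ : ∀ e, J e < net.d e.1) (hJ' : ∀ e, J' e < net.d e.1) :
    net.env a J J' =
      ∏ b : {b : V // G.Adj a b},
        net.message a b.1
          (J ⟨⟨s(a, b.1), (SimpleGraph.mem_edgeSet G).mpr b.2⟩, Sym2.mem_mk_left a b.1⟩)
          (J' ⟨⟨s(a, b.1), (SimpleGraph.mem_edgeSet G).mpr b.2⟩, Sym2.mem_mk_left a b.1⟩) := by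
    classical
  -- notation for the edge `{a,b}` as an element of the edges incident to `a`
  set E0 : (b : {b : V // G.Adj a b}) → {e : G.edgeSet // a ∈ (e : Sym2 V)} :=
    fun b => ⟨⟨s(a, b.1), (SimpleGraph.mem_edgeSet G).mpr b.2⟩, Sym2.mem_mk_left a b.1⟩ with hE0
  -- Step 3 (core): the environment partial sums factor over the branches
  have key : ∀ (Jf : {e : G.edgeSet // a ∈ (e : Sym2 V)} → ℕ) (i : {c : V // c ≠ a} → Fin 2),
      (∑ k ∈ Fintype.piFinset (fun e : {e : G.edgeSet // a ∉ (e : Sym2 V)} =>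
          Finset.range (net.d e.1)),
        ∏ c : {c : V // c ≠ a},
          net.T c.1 (i c)
            (fun e => if h : a ∈ (e.1 : Sym2 V) then Jf ⟨e.1, h⟩ else k ⟨e.1, h⟩)) =
      ∏ b : {b : V // G.Adj a b},
        net.branchVec a b.1 (Jf (E0 b)) (TB.spinEquiv hG a i b) := by
    intro Jf i
    simp only [TensorNet.branchVec, TB.spinEquiv, Equiv.coe_fn_mk]
    rw [Finset.prod_univ_sum]
    refine Finset.sum_nbij'
      (fun k => fun b e => k ⟨e.1, TB.not_mem_of_branchE hG b.2 e.2⟩)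
      (fun K => fun e => K (TB.edgeBranchOf hG e) ⟨e.1, TB.edgeBranchOf_mem hG e⟩)
      ?_ ?_ ?_ ?_ ?_
    · intro k hk
      rw [Fintype.mem_piFinset] at hk
      rw [Fintype.mem_piFinset]
      intro b
      rw [Fintype.mem_piFinset]
      intro e
      exact hk _
    · intro K hK
      rw [Fintype.mem_piFinset] at hK
      rw [Fintype.mem_piFinset]
      intro e
      have h := hK (TB.edgeBranchOf hG e)
      rw [Fintype.mem_piFinset] at h
      exact h _
    · intro k _
      funext e
      rfl
    · intro K _
      funext b e
      exact TB.branch_app_congr K (TB.edgeBranchOf_eq hG _ b e.2) rfl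
    · intro k _
      rw [Finset.prod_sigma', Finset.univ_sigma_univ]
      refine Fintype.prod_equiv (TB.vertEquiv hG a) _ _ fun c => ?_
      simp only [TB.vertEquiv, Equiv.coe_fn_mk]
      show net.T c.1 (i c) _ = net.T c.1 (i c) _
      refine congrArg (net.T c.1 (i c)) ?_
      funext e
      by_cases ha : a ∈ (e.1 : Sym2 V)
      · have hee : (e.1 : Sym2 V) = s(a, (TB.branchOf hG c).1) :=
          TB.edge_eq_of_mem hG (TB.branchOf hG c).2 (TB.branchOf_mem hG c) e.1 ha e.2
        rw [dif_pos ha]; refine Eq.trans ?_ (if_pos hee).symm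
        exact congrArg Jf (Subtype.ext (Subtype.ext hee))
      · have hne2 : (e.1 : Sym2 V) ≠ s(a, (TB.branchOf hG c).1) := by
          intro h
          exact ha (by rw [h]; exact Sym2.mem_mk_left _ _)
        have hbe : e.1 ∈ branchE G a (TB.branchOf hG c).1 :=
          TB.mem_branchE_of hG (TB.branchOf hG c).2 e.1 ha e.2 (TB.branchOf_mem hG c)
        rw [dif_neg ha]; refine Eq.trans ?_ (if_neg hne2).symm; refine Eq.trans ?_ (dif_pos hbe).symm; rfl
  -- Step 2: each message is a sum over branch spin configurations of `w ⋅ conj w`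
  have msg : ∀ b : {b : V // G.Adj a b},
      net.message a b.1 (J (E0 b)) (J' (E0 b)) =
        ∑ ib : ({c : V // c ∈ branchV G a b.1} → Fin 2),
          net.branchVec a b.1 (J (E0 b)) ib *
            (starRingEnd ℂ) (net.branchVec a b.1 (J' (E0 b)) ib) := by
    intro b
    rw [TensorNet.message]
    refine Finset.sum_congr rfl fun ib _ => ?_
    simp only [TensorNet.branchVec]
    exact TB.factor_sum _ _ _ _
  calc net.env a J J'
      = ∑ i : ({c : V // c ≠ a} → Fin 2),
          (∑ k ∈ Fintype.piFinset (fun e : {e : G.edgeSet // a ∉ (e : Sym2 V)} =>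
              Finset.range (net.d e.1)),
            ∏ c : {c : V // c ≠ a},
              net.T c.1 (i c)
                (fun e => if h : a ∈ (e.1 : Sym2 V) then J ⟨e.1, h⟩ else k ⟨e.1, h⟩)) *
          (starRingEnd ℂ)
          (∑ k' ∈ Fintype.piFinset (fun e : {e : G.edgeSet // a ∉ (e : Sym2 V)} =>
              Finset.range (net.d e.1)),
            ∏ c : {c : V // c ≠ a},
              net.T c.1 (i c)
                (fun e => if h : a ∈ (e.1 : Sym2 V) then J' ⟨e.1, h⟩ else k' ⟨e.1, h⟩)) := by
        rw [TensorNet.env]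
        exact Finset.sum_congr rfl fun i _ => TB.factor_sum _ _ _ _
    _ = ∑ i : ({c : V // c ≠ a} → Fin 2),
          ∏ b : {b : V // G.Adj a b},
            (net.branchVec a b.1 (J (E0 b)) (TB.spinEquiv hG a i b) *
              (starRingEnd ℂ) (net.branchVec a b.1 (J' (E0 b)) (TB.spinEquiv hG a i b))) := by
        refine Finset.sum_congr rfl fun i _ => ?_
        rw [key J i, key J' i, map_prod, ← Finset.prod_mul_distrib]
    _ = ∑ I : (∀ b : {b : V // G.Adj a b}, {c : V // c ∈ branchV G a b.1} → Fin 2),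
          ∏ b : {b : V // G.Adj a b},
            (net.branchVec a b.1 (J (E0 b)) (I b) *
              (starRingEnd ℂ) (net.branchVec a b.1 (J' (E0 b)) (I b))) :=
        Fintype.sum_equiv (TB.spinEquiv hG a) _ _ fun i => rfl
    _ = ∏ b : {b : V // G.Adj a b},
          ∑ ib : ({c : V // c ∈ branchV G a b.1} → Fin 2),
            (net.branchVec a b.1 (J (E0 b)) ib *
              (starRingEnd ℂ) (net.branchVec a b.1 (J' (E0 b)) ib)) :=
        by rw [Fintype.prod_sum]
    _ = ∏ b : {b : V // G.Adj a b},
        net.message a b.1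
          (J ⟨⟨s(a, b.1), (SimpleGraph.mem_edgeSet G).mpr b.2⟩, Sym2.mem_mk_left a b.1⟩)
          (J' ⟨⟨s(a, b.1), (SimpleGraph.mem_edgeSet G).mpr b.2⟩, Sym2.mem_mk_left a b.1⟩) :=
        Finset.prod_congr rfl fun b _ => (msg b).symm
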